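/- Let λ > 0, G > 0, and for t ≥ 1 set η_t = 1/(λ t). Suppose real numbers a_1, ..., a_T ≥ 0 and b_1, ..., b_T satisfy b_t ≤ (a_t - a_{t+1})/(2η_t) - (λ/2)a_t + (η_t G²)/2 for each t, where a_{T+1} ≥ 0. Then ∑_{t=1}^T b_t ≤ (G²/(2λ))(1 + ln T). -/
import Mathlib

theorem telescoping_log_regret (lam G : ℝ) (hlam : 0 < lam) (hG : 0 < G)
    (T : ℕ) (hT : 1 ≤ T) (a b : ℕ → ℝ)
    (ha : ∀ t ∈ Finset.Icc 1 T, 0 ≤ a t) (haT : 0 ≤ a (T + 1))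
    (hb : ∀ t ∈ Finset.Icc 1 T,
      b t ≤ (a t - a (t + 1)) / (2 * (1 / (lam * t))) - lam / 2 * a t
            + (1 / (lam * t)) * G ^ 2 / 2) :
    ∑ t ∈ Finset.Icc 1 T, b t ≤ G ^ 2 / (2 * lam) * (1 + Real.log T) := by
  set f : ℕ → ℝ := fun i => lam * i / 2 * a (i + 1) with hf
  have key : ∀ t ∈ Finset.Icc 1 T,
      b t ≤ (f (t - 1) - f t) + G ^ 2 / (2 * lam) * (1 / t) := by
    intro t ht
    obtain ⟨ht1, ht2⟩ := Finset.mem_Icc.mp ht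
    have htpos : (0:ℝ) < t := by exact_mod_cast ht1
    have hb' := hb t ht
    have hcast : ((t - 1 : ℕ) : ℝ) = (t : ℝ) - 1 := by
      push_cast [Nat.cast_sub ht1]; ring
    have hsucc : t - 1 + 1 = t := by omega
    have heq : (a t - a (t + 1)) / (2 * (1 / (lam * t))) - lam / 2 * a t
            + (1 / (lam * t)) * G ^ 2 / 2
        = (f (t - 1) - f t) + G ^ 2 / (2 * lam) * (1 / t) := by
      simp only [hf, hsucc, hcast]
      field_simp
      ring
    linarith [heq ▸ hb']
  have hsum := Finset.sum_le_sum key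
  have htel : ∑ t ∈ Finset.Icc 1 T, (f (t - 1) - f t) = f 0 - f T := by
    rw [show Finset.Icc 1 T = Finset.Ico 1 (T + 1) by rw [Finset.Ico_add_one_right_eq_Icc],
      Finset.sum_Ico_eq_sum_range]
    have : ∀ i ∈ Finset.range (T + 1 - 1), f (1 + i - 1) - f (1 + i) = f i - f (i + 1) := by
      intro i _
      congr 2 <;> omega
    rw [Finset.sum_congr rfl this, Finset.sum_range_sub' f]
    norm_num
  have hf0 : f 0 = 0 := by simp [hf]
  have hfT : 0 ≤ f T := by
    have h0 : (0:ℝ) ≤ (T:ℝ) := by positivity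
    simp only [hf]
    positivity
  have hharm : ∑ t ∈ Finset.Icc 1 T, (1:ℝ)/t ≤ 1 + Real.log T := by
    have h1 := harmonic_le_one_add_log T
    have h2 : ((harmonic T : ℚ) : ℝ) = ∑ t ∈ Finset.Icc 1 T, (1:ℝ)/t := by
      rw [harmonic_eq_sum_Icc]
      push_cast
      simp [one_div]
    linarith [h2 ▸ h1]
  have hc : 0 ≤ G ^ 2 / (2 * lam) := by positivity
  calc ∑ t ∈ Finset.Icc 1 T, b t
      ≤ ∑ t ∈ Finset.Icc 1 T, ((f (t - 1) - f t) + G ^ 2 / (2 * lam) * (1 / t)) := hsum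
    _ = (f 0 - f T) + G ^ 2 / (2 * lam) * ∑ t ∈ Finset.Icc 1 T, (1:ℝ)/t := by
        rw [Finset.sum_add_distrib, htel, Finset.mul_sum]
    _ ≤ G ^ 2 / (2 * lam) * (1 + Real.log T) := by
        have := mul_le_mul_of_nonneg_left hharm hc
        linarith
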